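/- Let M > 0 and let π and ρ be probability measures on ℝ, each giving full mass to the set {x : |x| ≤ √M}, and suppose ε = KL(π‖ρ) < ∞. Then the standard deviations satisfy |Std(π) − Std(ρ)| ≤ √(4M·√ε), i.e. |Std(π) − Std(ρ)| ≤ 2·√M·ε^{1/4}. -/

import Mathlib

open MeasureTheory
open scoped Classical

/-- Kullback–Leibler divergence `KL(μ‖ν)`, valued in `EReal`:
`∫ log (dμ/dν) dμ` when `μ ≪ ν` and the integrand is `μ`-integrable, `⊤` otherwise. -/
noncomputable def klDiv {Ω : Type*} [MeasurableSpace Ω] (μ ν : Measure Ω) : EReal :=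
  if μ ≪ ν ∧ Integrable (fun ω => Real.log (μ.rnDeriv ν ω).toReal) μ
  then ((∫ ω, Real.log (μ.rnDeriv ν ω).toReal ∂μ : ℝ) : EReal)
  else ⊤

/-- Mean of a measure on `ℝ`. -/
noncomputable def meanM (μ : Measure ℝ) : ℝ := ∫ x, x ∂μ

/-- Variance of a measure on `ℝ`: `∫ x² dμ − (∫ x dμ)²`. -/
noncomputable def varM (μ : Measure ℝ) : ℝ := (∫ x, x ^ 2 ∂μ) - (∫ x, x ∂μ) ^ 2

/-- Standard deviation of a measure on `ℝ`. -/
noncomputable def stdM (μ : Measure ℝ) : ℝ := Real.sqrt (varM μ)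

set_option maxHeartbeats 1000000

lemma sq_sqrt_sub_one_le (x : ℝ) (hx : 0 ≤ x) :
    (Real.sqrt x - 1) ^ 2 ≤ x * Real.log x - x + 1 := by
  rcases eq_or_lt_of_le hx with h | h
  · simp [← h]
  · have hs : 0 < Real.sqrt x := Real.sqrt_pos.mpr h
    have hlog : 1 - (Real.sqrt x)⁻¹ ≤ Real.log (Real.sqrt x) :=
      Real.one_sub_inv_le_log_of_pos hs
    have hlx : Real.log x = 2 * Real.log (Real.sqrt x) := by
      rw [Real.log_sqrt hx]; ring
    have hsq : Real.sqrt x ^ 2 = x := Real.sq_sqrt hx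
    have hxinv : x * (Real.sqrt x)⁻¹ = Real.sqrt x := by
      have hx' : x = Real.sqrt x * Real.sqrt x := (Real.mul_self_sqrt hx).symm
      calc x * (Real.sqrt x)⁻¹ = Real.sqrt x * Real.sqrt x * (Real.sqrt x)⁻¹ := by rw [← hx']
        _ = Real.sqrt x := mul_inv_cancel_right₀ hs.ne' _
    have hmul : x * (1 - (Real.sqrt x)⁻¹) ≤ x * Real.log (Real.sqrt x) :=
      mul_le_mul_of_nonneg_left hlog (le_of_lt h)
    nlinarith [hmul, hxinv, hsq]

lemma abs_sqrt_sub_sqrt_le {a b : ℝ} (ha : 0 ≤ a) (hb : 0 ≤ b) :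
    |Real.sqrt a - Real.sqrt b| ≤ Real.sqrt |a - b| := by
  have key : ∀ u v : ℝ, 0 ≤ u → 0 ≤ v → v ≤ u →
      Real.sqrt u - Real.sqrt v ≤ Real.sqrt (u - v) := by
    intro u v hu hv huv
    have h1 : Real.sqrt u ≤ Real.sqrt v + Real.sqrt (u - v) := by
      have h2 : u ≤ (Real.sqrt v + Real.sqrt (u - v)) ^ 2 := by
        have := Real.sq_sqrt hv
        have := Real.sq_sqrt (sub_nonneg.mpr huv)
        have := Real.sqrt_nonneg v
        have := Real.sqrt_nonneg (u - v)
        nlinarith [mul_nonneg (Real.sqrt_nonneg v) (Real.sqrt_nonneg (u - v))]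
      calc Real.sqrt u ≤ Real.sqrt ((Real.sqrt v + Real.sqrt (u - v)) ^ 2) :=
            Real.sqrt_le_sqrt h2
        _ = Real.sqrt v + Real.sqrt (u - v) := by
            rw [Real.sqrt_sq (by positivity)]
    linarith
  rcases le_total b a with h | h
  · rw [abs_of_nonneg (sub_nonneg.mpr h), abs_of_nonneg (sub_nonneg.mpr (Real.sqrt_le_sqrt h))]
    exact key a b ha hb h
  · rw [abs_of_nonpos (sub_nonpos.mpr h), abs_of_nonpos (sub_nonpos.mpr (Real.sqrt_le_sqrt h)),
      neg_sub, neg_sub]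
    exact key b a hb ha h

lemma abs_integral_sub_le_of_bounds {α : Type*} [MeasurableSpace α] (ρ : Measure α)
    [IsProbabilityMeasure ρ] {rr ff : α → ℝ} (C : ℝ)
    (hr_int : Integrable rr ρ) (hr_one : ∫ x, rr x ∂ρ = 1)
    (hf_int : Integrable ff ρ) (hrf_int : Integrable (fun x => rr x * ff x) ρ)
    (hf_bd : ∀ᵐ x ∂ρ, 0 ≤ ff x ∧ ff x ≤ 2 * C) :
    |(∫ x, rr x * ff x ∂ρ) - ∫ x, ff x ∂ρ| ≤ C * ∫ x, |rr x - 1| ∂ρ := by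
  have h1 : Integrable (fun x => (rr x - 1) * (ff x - C)) ρ := by
    have : (fun x => (rr x - 1) * (ff x - C)) =
        fun x => rr x * ff x - ff x - C * rr x + C := by funext x; ring
    rw [this]
    exact ((hrf_int.sub hf_int).sub (hr_int.const_mul C)).add (integrable_const C)
  have hF1 : Integrable (fun x => rr x * ff x - ff x) ρ := hrf_int.sub hf_int
  have hF2 : Integrable (fun x => rr x * ff x - ff x - C * rr x) ρ := hF1.sub (hr_int.const_mul C)
  have h2 : (∫ x, rr x * ff x ∂ρ) - ∫ x, ff x ∂ρ
      = ∫ x, (rr x - 1) * (ff x - C) ∂ρ := by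
    have he : ∫ x, (rr x - 1) * (ff x - C) ∂ρ
        = ∫ x, (rr x * ff x - ff x - C * rr x + C) ∂ρ := by
      congr 1; funext x; ring
    rw [he, integral_add hF2 (integrable_const C),
      integral_sub hF1 (hr_int.const_mul C), integral_sub hrf_int hf_int,
      MeasureTheory.integral_const_mul, hr_one, integral_const]
    simp
  rw [h2]
  calc |∫ x, (rr x - 1) * (ff x - C) ∂ρ| ≤ ∫ x, |rr x - 1| * |ff x - C| ∂ρ := by
        simpa [Real.norm_eq_abs, abs_mul] using
          norm_integral_le_integral_norm (fun x => (rr x - 1) * (ff x - C)) (μ := ρ)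
    _ ≤ ∫ x, |rr x - 1| * C ∂ρ := by
        have hL : Integrable (fun x => |rr x - 1| * |ff x - C|) ρ := by
          simpa [abs_mul] using h1.abs
        have hR : Integrable (fun x => |rr x - 1| * C) ρ := by
          have hd : Integrable (fun x => rr x - 1) ρ := hr_int.sub (integrable_const 1)
          exact hd.abs.mul_const C
        apply integral_mono_ae hL hR
        filter_upwards [hf_bd] with x hx
        apply mul_le_mul_of_nonneg_left _ (abs_nonneg _)
        rw [abs_le]; constructor <;> linarith [hx.1, hx.2]
    _ = C * ∫ x, |rr x - 1| ∂ρ := by rw [integral_mul_const, mul_comm]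

lemma integral_sq_sub_eq (μ : Measure ℝ) [IsProbabilityMeasure μ] (c : ℝ)
    (h1 : Integrable (fun x => x) μ) (h2 : Integrable (fun x => x ^ 2) μ) :
    ∫ x, (x - c) ^ 2 ∂μ = (∫ x, x ^ 2 ∂μ) - 2 * c * (∫ x, x ∂μ) + c ^ 2 := by
  have he : ∫ x, (x - c) ^ 2 ∂μ = ∫ x, (x ^ 2 - (2 * c) * x + c ^ 2) ∂μ := by
    congr 1; funext x; ring
  have hA : Integrable (fun x => x ^ 2 - (2 * c) * x) μ := h2.sub (h1.const_mul (2 * c))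
  rw [he, integral_add hA (integrable_const _), integral_sub h2 (h1.const_mul (2 * c)),
    MeasureTheory.integral_const_mul, integral_const]
  simp

/-- If `π` and `ρ` are probability measures on `ℝ` supported in `{x : |x| ≤ √M}` with
`KL(π‖ρ) = ε < ∞`, then `|Std(π) − Std(ρ)| ≤ √(4M√ε)`. -/
theorem std_gap_le_of_klDiv_eq (M : ℝ) (hM : 0 < M) (π ρ : Measure ℝ)
    [IsProbabilityMeasure π] [IsProbabilityMeasure ρ]
    (hπ : π {x : ℝ | |x| ≤ Real.sqrt M} = 1)
    (hρ : ρ {x : ℝ | |x| ≤ Real.sqrt M} = 1)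
    (ε : ℝ) (hε : klDiv π ρ = (ε : EReal)) :
    |stdM π - stdM ρ| ≤ Real.sqrt (4 * M * Real.sqrt ε) := by
  rw [klDiv] at hε
  by_cases hcond : π ≪ ρ ∧ Integrable (fun ω => Real.log ((π.rnDeriv ρ) ω).toReal) π
  case neg => rw [if_neg hcond] at hε; exact absurd hε (by simp)
  rw [if_pos hcond] at hε
  obtain ⟨hac, hint⟩ := hcond
  have hεval : ∫ x, Real.log ((π.rnDeriv ρ) x).toReal ∂π = ε := by exact_mod_cast hε
  set s : ℝ := Real.sqrt M with hsdef
  have hs_pos : 0 < s := Real.sqrt_pos.mpr hM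
  have hs_sq : s ^ 2 = M := Real.sq_sqrt hM.le
  set r : ℝ → ℝ := fun x => ((π.rnDeriv ρ) x).toReal with hrdef
  have hr_meas : Measurable r := (Measure.measurable_rnDeriv π ρ).ennreal_toReal
  have hr_nn : ∀ x, 0 ≤ r x := fun x => ENNReal.toReal_nonneg
  have hr_int : Integrable r ρ := Measure.integrable_toReal_rnDeriv
  have hr_one : ∫ x, r x ∂ρ = 1 := by
    rw [hrdef, Measure.integral_toReal_rnDeriv hac]; simp
  have hball : MeasurableSet {x : ℝ | |x| ≤ s} :=
    (isClosed_le continuous_abs continuous_const).measurableSet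
  have hπae : ∀ᵐ x ∂π, |x| ≤ s := by
    rw [ae_iff]
    have h0 : {x : ℝ | ¬ |x| ≤ s} = {x : ℝ | |x| ≤ s}ᶜ := rfl
    rw [h0, prob_compl_eq_zero_iff hball]; exact hπ
  have hρae : ∀ᵐ x ∂ρ, |x| ≤ s := by
    rw [ae_iff]
    have h0 : {x : ℝ | ¬ |x| ≤ s} = {x : ℝ | |x| ≤ s}ᶜ := rfl
    rw [h0, prob_compl_eq_zero_iff hball]; exact hρ
  -- integrability of moments
  have hid : ∀ (μ : Measure ℝ) [IsProbabilityMeasure μ], (∀ᵐ x ∂μ, |x| ≤ s) →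
      Integrable (fun x => x) μ ∧ Integrable (fun x => x ^ 2) μ ∧ |∫ x, x ∂μ| ≤ s := by
    intro μ _ hae
    have h1 : Integrable (fun x : ℝ => x) μ := by
      apply Integrable.mono' (integrable_const s) measurable_id.aestronglyMeasurable
      filter_upwards [hae] with x hx; simpa using hx
    have h2 : Integrable (fun x : ℝ => x ^ 2) μ := by
      apply Integrable.mono' (integrable_const (s ^ 2))
        (measurable_id.pow_const 2).aestronglyMeasurable
      filter_upwards [hae] with x hx
      rw [Real.norm_eq_abs, abs_pow]
      exact pow_le_pow_left₀ (abs_nonneg x) hx 2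
    refine ⟨h1, h2, ?_⟩
    calc |∫ x, x ∂μ| ≤ ∫ x, |x| ∂μ := by
          simpa [Real.norm_eq_abs] using norm_integral_le_integral_norm (fun x : ℝ => x) (μ := μ)
      _ ≤ ∫ _x, s ∂μ := by
          apply integral_mono_ae h1.abs (integrable_const s)
          filter_upwards [hae] with x hx; exact hx
      _ = s := by simp
  obtain ⟨hxπ, hx2π, hm1⟩ := hid π hπae
  obtain ⟨hxρ, hx2ρ, hm2⟩ := hid ρ hρae
  set m1 : ℝ := ∫ x, x ∂π with hm1def
  set m2 : ℝ := ∫ x, x ∂ρ with hm2def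
  -- KL value as integral of φ(r)
  have hrlog_int : Integrable (fun x => r x * Real.log (r x)) ρ := by
    have := (MeasureTheory.integrable_rnDeriv_smul_iff hac).mpr hint
    simpa [smul_eq_mul] using this
  have hrlog_val : ∫ x, r x * Real.log (r x) ∂ρ = ε := by
    have := MeasureTheory.integral_rnDeriv_smul hac (f := fun x => Real.log (r x))
    simp only [smul_eq_mul] at this
    rw [this]; exact hεval
  have hφ1 : Integrable (fun x => r x * Real.log (r x) - r x) ρ := hrlog_int.sub hr_int
  have hφ_int : Integrable (fun x => r x * Real.log (r x) - r x + 1) ρ :=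
    hφ1.add (integrable_const 1)
  have hφ_val : ∫ x, (r x * Real.log (r x) - r x + 1) ∂ρ = ε := by
    rw [integral_add hφ1 (integrable_const 1),
      integral_sub hrlog_int hr_int, hrlog_val, hr_one, integral_const]
    simp
  set u : ℝ → ℝ := fun x => Real.sqrt (r x) with hudef
  have hu_meas : Measurable u := Real.continuous_sqrt.measurable.comp hr_meas
  have hu_nn : ∀ x, 0 ≤ u x := fun x => Real.sqrt_nonneg _
  have hu_sq : ∀ x, u x ^ 2 = r x := fun x => Real.sq_sqrt (hr_nn x)
  have hpw : ∀ x, (u x - 1) ^ 2 ≤ r x * Real.log (r x) - r x + 1 :=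
    fun x => sq_sqrt_sub_one_le (r x) (hr_nn x)
  have hum_int : Integrable (fun x => (u x - 1) ^ 2) ρ := by
    apply Integrable.mono' hφ_int
      (((hu_meas.sub measurable_const).pow_const 2).aestronglyMeasurable)
    filter_upwards with x
    rw [Real.norm_eq_abs, abs_of_nonneg (sq_nonneg _)]
    exact hpw x
  have hA : ∫ x, (u x - 1) ^ 2 ∂ρ ≤ ε := by
    rw [← hφ_val]
    exact integral_mono hum_int hφ_int hpw
  have hε_nn : 0 ≤ ε := le_trans (integral_nonneg fun x => sq_nonneg _) hA
  have h2r : Integrable (fun x => 2 * r x) ρ := hr_int.const_mul 2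
  have h22 : Integrable (fun x => 2 * r x + 2) ρ := h2r.add (integrable_const 2)
  have hup_int : Integrable (fun x => (u x + 1) ^ 2) ρ := by
    apply Integrable.mono' h22
      (((hu_meas.add measurable_const).pow_const 2).aestronglyMeasurable)
    filter_upwards with x
    show ‖(u x + 1) ^ 2‖ ≤ 2 * r x + 2
    rw [Real.norm_eq_abs, abs_of_nonneg (sq_nonneg _)]
    nlinarith [hu_sq x, sq_nonneg (u x - 1), hu_nn x]
  have hB : ∫ x, (u x + 1) ^ 2 ∂ρ ≤ 4 := by
    calc ∫ x, (u x + 1) ^ 2 ∂ρ ≤ ∫ x, (2 * r x + 2) ∂ρ := by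
          apply integral_mono hup_int h22
          intro x
          show (u x + 1) ^ 2 ≤ 2 * r x + 2
          nlinarith [hu_sq x, sq_nonneg (u x - 1), hu_nn x]
      _ = 4 := by
          rw [integral_add h2r (integrable_const 2),
            MeasureTheory.integral_const_mul, hr_one, integral_const]
          simp
          norm_num
  -- TV bound
  set T : ℝ := ∫ x, |r x - 1| ∂ρ with hTdef
  have hT_int : Integrable (fun x => |r x - 1|) ρ := (hr_int.sub (integrable_const 1)).abs
  have hT_nn : 0 ≤ T := integral_nonneg fun x => abs_nonneg _
  have hT_gen : ∀ t : ℝ, 0 < t → T ≤ (t * ε + 4 / t) / 2 := by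
    intro t ht
    have hpt : ∀ x, |r x - 1| ≤ (t * (u x - 1) ^ 2 + (u x + 1) ^ 2 / t) / 2 := by
      intro x
      have habs : |r x - 1| = |u x - 1| * (u x + 1) := by
        rw [← abs_of_nonneg (by linarith [hu_nn x] : (0:ℝ) ≤ u x + 1), ← abs_mul]
        congr 1
        rw [← hu_sq x]; ring
      have h2 : (u x - 1) ^ 2 = |u x - 1| ^ 2 := (sq_abs _).symm
      rw [habs, h2]
      have hkey : ∀ a b : ℝ, (t * a ^ 2 + b ^ 2 / t) / 2 - a * b
          = (t * a - b) ^ 2 / (2 * t) := by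
        intro a b
        field_simp
        ring
      have hnn : 0 ≤ (t * |u x - 1| - (u x + 1)) ^ 2 / (2 * t) :=
        div_nonneg (sq_nonneg _) (by positivity)
      linarith [hkey |u x - 1| (u x + 1), hnn]
    have hRHS_int : Integrable (fun x => (t * (u x - 1) ^ 2 + (u x + 1) ^ 2 / t) / 2) ρ :=
      (((hum_int.const_mul t).add (hup_int.div_const t)).div_const 2)
    calc T ≤ ∫ x, (t * (u x - 1) ^ 2 + (u x + 1) ^ 2 / t) / 2 ∂ρ :=
          integral_mono hT_int hRHS_int hpt
      _ = ((t * ∫ x, (u x - 1) ^ 2 ∂ρ) + (∫ x, (u x + 1) ^ 2 ∂ρ) / t) / 2 := by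
          rw [integral_div, integral_add (hum_int.const_mul t) (hup_int.div_const t),
            MeasureTheory.integral_const_mul, integral_div]
      _ ≤ (t * ε + 4 / t) / 2 := by
          have h1 : t * ∫ x, (u x - 1) ^ 2 ∂ρ ≤ t * ε := mul_le_mul_of_nonneg_left hA ht.le
          have h2 : (∫ x, (u x + 1) ^ 2 ∂ρ) / t ≤ 4 / t := by gcongr
          linarith
  have hT_le : T ≤ 2 * Real.sqrt ε := by
    rcases eq_or_lt_of_le hε_nn with hε0 | hε0
    · rw [← hε0, Real.sqrt_zero, mul_zero]
      by_contra hcon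
      push_neg at hcon
      have h8 : (0:ℝ) < 8 / T := by positivity
      have hgen := hT_gen (8 / T) h8
      rw [← hε0] at hgen
      have hx : (8 / T * 0 + 4 / (8 / T)) / 2 = T / 4 := by
        rw [mul_zero, zero_add]
        field_simp
        ring
      rw [hx] at hgen
      linarith
    · have hsq : 0 < Real.sqrt ε := Real.sqrt_pos.mpr hε0
      have hgen := hT_gen (2 / Real.sqrt ε) (by positivity)
      have hse : Real.sqrt ε ^ 2 = ε := Real.sq_sqrt hε_nn
      have e1 : (2 / Real.sqrt ε) * ε = 2 * Real.sqrt ε := by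
        rw [div_mul_eq_mul_div, mul_div_assoc, Real.div_sqrt]
      have e2 : 4 / (2 / Real.sqrt ε) = 2 * Real.sqrt ε := by
        rw [div_div_eq_mul_div]; ring
      have heq : ((2 / Real.sqrt ε) * ε + 4 / (2 / Real.sqrt ε)) / 2 = 2 * Real.sqrt ε := by
        rw [e1, e2]; ring
      rw [heq] at hgen
      exact hgen
  -- variance comparison
  have hvπ : varM π = (∫ x, x ^ 2 ∂π) - m1 ^ 2 := by rw [varM, ← hm1def]
  have hvρ : varM ρ = (∫ x, x ^ 2 ∂ρ) - m2 ^ 2 := by rw [varM, ← hm2def]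
  have hfπ_val : ∫ x, (x - m2) ^ 2 ∂π = (∫ x, x ^ 2 ∂π) - 2 * m2 * m1 + m2 ^ 2 := by
    rw [integral_sq_sub_eq π m2 hxπ hx2π, ← hm1def]
  have hfρ_val : ∫ x, (x - m2) ^ 2 ∂ρ = varM ρ := by
    rw [integral_sq_sub_eq ρ m2 hxρ hx2ρ, ← hm2def, hvρ]; ring
  have hgρ_val : ∫ x, (x - m1) ^ 2 ∂ρ = (∫ x, x ^ 2 ∂ρ) - 2 * m1 * m2 + m1 ^ 2 := by
    rw [integral_sq_sub_eq ρ m1 hxρ hx2ρ, ← hm2def]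
  have hgπ_val : ∫ x, (x - m1) ^ 2 ∂π = varM π := by
    rw [integral_sq_sub_eq π m1 hxπ hx2π, ← hm1def, hvπ]; ring
  have hvπ_nn : 0 ≤ varM π := by
    rw [← hgπ_val]; exact integral_nonneg fun x => sq_nonneg _
  have hvρ_nn : 0 ≤ varM ρ := by
    rw [← hfρ_val]; exact integral_nonneg fun x => sq_nonneg _
  -- a.e. bounds for the shifted squares
  have hbd : ∀ c : ℝ, |c| ≤ s → ∀ᵐ x ∂ρ, 0 ≤ (x - c) ^ 2 ∧ (x - c) ^ 2 ≤ 2 * (2 * M) := by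
    intro c hc
    filter_upwards [hρae] with x hx
    refine ⟨sq_nonneg _, ?_⟩
    have h1 : |x - c| ≤ 2 * s := by
      calc |x - c| ≤ |x| + |c| := abs_sub _ _
        _ ≤ 2 * s := by linarith
    have h2 : (x - c) ^ 2 = |x - c| ^ 2 := (sq_abs _).symm
    rw [h2]
    calc |x - c| ^ 2 ≤ (2 * s) ^ 2 := pow_le_pow_left₀ (abs_nonneg _) h1 2
      _ = 2 * (2 * M) := by rw [mul_pow, hs_sq]; ring
  -- transfer integrals via rnDeriv
  have htransfer : ∀ c : ℝ, |c| ≤ s →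
      |(∫ x, (x - c) ^ 2 ∂π) - ∫ x, (x - c) ^ 2 ∂ρ| ≤ 2 * M * T := by
    intro c hc
    have hintπ : Integrable (fun x => (x - c) ^ 2) π := by
      have he : (fun x : ℝ => (x - c) ^ 2) = fun x => x ^ 2 - (2 * c) * x + c ^ 2 := by
        funext x; ring
      rw [he]; exact (hx2π.sub (hxπ.const_mul (2 * c))).add (integrable_const _)
    have hintρ : Integrable (fun x => (x - c) ^ 2) ρ := by
      have he : (fun x : ℝ => (x - c) ^ 2) = fun x => x ^ 2 - (2 * c) * x + c ^ 2 := by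
        funext x; ring
      rw [he]; exact (hx2ρ.sub (hxρ.const_mul (2 * c))).add (integrable_const _)
    have hrf_int : Integrable (fun x => r x * (x - c) ^ 2) ρ := by
      have := (MeasureTheory.integrable_rnDeriv_smul_iff hac
        (f := fun x => (x - c) ^ 2)).mpr hintπ
      simpa [smul_eq_mul] using this
    have hval : ∫ x, r x * (x - c) ^ 2 ∂ρ = ∫ x, (x - c) ^ 2 ∂π := by
      have := MeasureTheory.integral_rnDeriv_smul hac (f := fun x => (x - c) ^ 2)
      simpa [smul_eq_mul] using this
    rw [← hval]
    exact abs_integral_sub_le_of_bounds ρ (2 * M) hr_int hr_one hintρ hrf_int (hbd c hc)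
  have hf_gap := htransfer m2 hm2
  have hg_gap := htransfer m1 hm1
  have hfeq : ∫ x, (x - m2) ^ 2 ∂π = varM π + (m1 - m2) ^ 2 := by
    rw [hfπ_val, hvπ]; ring
  have hgeq : ∫ x, (x - m1) ^ 2 ∂ρ = varM ρ + (m1 - m2) ^ 2 := by
    rw [hgρ_val, hvρ]; ring
  have hvar_gap : |varM π - varM ρ| ≤ 4 * M * Real.sqrt ε := by
    have hd1 : (∫ x, (x - m2) ^ 2 ∂π) - ∫ x, (x - m2) ^ 2 ∂ρ ≤ 2 * M * T :=
      le_trans (le_abs_self _) hf_gap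
    have hd2 : (∫ x, (x - m1) ^ 2 ∂ρ) - ∫ x, (x - m1) ^ 2 ∂π ≤ 2 * M * T := by
      have := neg_abs_le ((∫ x, (x - m1) ^ 2 ∂π) - ∫ x, (x - m1) ^ 2 ∂ρ)
      linarith [hg_gap]
    have hTM : 2 * M * T ≤ 2 * M * (2 * Real.sqrt ε) :=
      mul_le_mul_of_nonneg_left hT_le (by positivity)
    have hub1 : varM π - varM ρ ≤ 4 * M * Real.sqrt ε := by
      linarith [sq_nonneg (m1 - m2), hfeq, hfρ_val, hd1, hTM]
    have hub2 : varM ρ - varM π ≤ 4 * M * Real.sqrt ε := by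
      linarith [sq_nonneg (m1 - m2), hgeq, hgπ_val, hd2, hTM]
    rw [abs_le]
    constructor <;> linarith
  rw [stdM, stdM]
  calc |Real.sqrt (varM π) - Real.sqrt (varM ρ)| ≤ Real.sqrt |varM π - varM ρ| :=
        abs_sqrt_sub_sqrt_le hvπ_nn hvρ_nn
    _ ≤ Real.sqrt (4 * M * Real.sqrt ε) := Real.sqrt_le_sqrt hvar_gap
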